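/- For all integers k ≥ 2 and c ≥ 2, every c-coloring of the perfect k-ary tree of height ⌊e^{1/(k−1)} · (k−1)^{c−1} · c!⌋ is 1-balanced (here e is the base of the natural logarithm and ⌊·⌋ is the floor function). -/

import Mathlib

/-- A `c`-coloring `χ` of the perfect `k`-ary tree of height `n` (nodes: strings over
`{1, …, k}`, modelled as `List (Fin k)`, of length at most `n`) is *1-balanced* if there are
a node `r`, a number `j`, and strings `s₁, …, s_k` each of length `j` such that the nodes
`r, r·1·s₁, …, r·k·s_k` all lie in the tree and receive the same color. -/
def IsOneBalanced (k c n : ℕ) (χ : List (Fin k) → Fin c) : Prop :=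
  ∃ (r : List (Fin k)) (j : ℕ) (s : Fin k → List (Fin k)),
    (∀ i, (s i).length = j) ∧
    r.length + 1 + j ≤ n ∧
    ∀ i : Fin k, χ (r ++ i :: s i) = χ r

/-- Required number of levels (minus one) for `m+1` colors. -/
def gfun (k : ℕ) : ℕ → ℕ
  | 0 => 1
  | m + 1 => k * gfun k m + 1

/-- The key combinatorial lemma, by induction on the number of available colors. -/
lemma key_lemma {k c : ℕ} (hk : 2 ≤ k) (n : ℕ) (χ : List (Fin k) → Fin c) :
    ∀ (m : ℕ) (S : Finset (Fin c)) (u : List (Fin k)) (L : Finset ℕ),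
      S.card = m + 1 →
      (∀ ℓ ∈ L, ℓ ≤ n) →
      u.length ∈ L →
      (∀ ℓ ∈ L, u.length ≤ ℓ) →
      (∀ w : List (Fin k), u <+: w → w.length ∈ L → χ w ∈ S) →
      gfun k m + 1 ≤ L.card →
      IsOneBalanced k c n χ := by
  intro m
  induction m with
  | zero =>
    intro S u L hScard hLn h0 hmin hcol hLcard
    -- S is a singleton; pick a second level in L.
    obtain ⟨a, rfl⟩ := Finset.card_eq_one.mp hScard
    simp only [gfun] at hLcard
    have hTne : (L.erase u.length).Nonempty := by
      rw [← Finset.card_pos, Finset.card_erase_of_mem h0]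
      omega
    obtain ⟨ℓ, hℓ⟩ := hTne
    have hℓL : ℓ ∈ L := Finset.mem_of_mem_erase hℓ
    have hℓne : ℓ ≠ u.length := Finset.ne_of_mem_erase hℓ
    have hℓge : u.length + 1 ≤ ℓ := by
      have := hmin ℓ hℓL; omega
    refine ⟨u, ℓ - u.length - 1, fun i => List.replicate (ℓ - u.length - 1) i,
      fun i => List.length_replicate, by have := hLn ℓ hℓL; omega, fun i => ?_⟩
    have h1 : χ (u ++ i :: List.replicate (ℓ - u.length - 1) i) ∈ ({a} : Finset (Fin c)) := by
      apply hcol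
      · exact ⟨i :: List.replicate (ℓ - u.length - 1) i, rfl⟩
      · have : (u ++ i :: List.replicate (ℓ - u.length - 1) i).length = ℓ := by
          simp [List.length_append, List.length_replicate]
          omega
        rwa [this]
    have h2 : χ u ∈ ({a} : Finset (Fin c)) := hcol u (List.prefix_refl u) h0
    rw [Finset.mem_singleton] at h1 h2
    rw [h1, h2]
  | succ m ih =>
    intro S u L hScard hLn h0 hmin hcol hLcard
    set ℓ₀ := u.length with hℓ₀
    have haS : χ u ∈ S := hcol u (List.prefix_refl u) h0
    by_cases hbal : ∃ ℓ ∈ L.erase ℓ₀, ∀ i : Fin k,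
        ∃ s : List (Fin k), s.length = ℓ - ℓ₀ - 1 ∧ χ (u ++ i :: s) = χ u
    · obtain ⟨ℓ, hℓ, hall⟩ := hbal
      choose s hs1 hs2 using hall
      have hℓL : ℓ ∈ L := Finset.mem_of_mem_erase hℓ
      have hℓge : ℓ₀ + 1 ≤ ℓ := by
        have h1 := hmin ℓ hℓL
        have h2 := Finset.ne_of_mem_erase hℓ
        omega
      exact ⟨u, ℓ - ℓ₀ - 1, s, hs1, by have := hLn ℓ hℓL; omega, hs2⟩
    · push_neg at hbal
      -- for each target level, some direction blocks the color χ u entirely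
      haveI : Nonempty (Fin k) := ⟨⟨0, by omega⟩⟩
      choose! b hb using hbal
      set T := L.erase ℓ₀ with hT
      have hTcard : k * gfun k m < T.card := by
        rw [hT, Finset.card_erase_of_mem h0]
        have := hLcard
        simp only [gfun] at this
        omega
      obtain ⟨i, _, hfib⟩ := Finset.exists_lt_card_fiber_of_mul_lt_card_of_maps_to
        (f := b) (t := (Finset.univ : Finset (Fin k)))
        (fun ℓ _ => Finset.mem_univ _) (by simpa using hTcard)
      set L' := T.filter (fun ℓ => b ℓ = i) with hL'
      have hL'ne : L'.Nonempty := by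
        rw [← Finset.card_pos]
        have : 1 ≤ gfun k m := by
          cases m with
          | zero => simp [gfun]
          | succ m' => simp only [gfun]; omega
        omega
      set ℓmin := L'.min' hL'ne with hℓmin
      have hℓminL' : ℓmin ∈ L' := L'.min'_mem hL'ne
      have hℓminT : ℓmin ∈ T := (Finset.mem_filter.mp hℓminL').1
      have hℓminL : ℓmin ∈ L := Finset.mem_of_mem_erase hℓminT
      have hℓminge : ℓ₀ + 1 ≤ ℓmin := by
        have h1 := hmin ℓmin hℓminL
        have h2 := Finset.ne_of_mem_erase hℓminT
        omega
      set u' := u ++ i :: List.replicate (ℓmin - ℓ₀ - 1) i with hu'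
      have hu'len : u'.length = ℓmin := by
        rw [hu']
        simp [List.length_append, List.length_replicate]
        omega
      -- key property: every extension of u' at a level in L' avoids the color χ u
      have hsub : L' ⊆ L := fun x hx => Finset.mem_of_mem_erase (Finset.mem_filter.mp hx).1
      apply ih (S.erase (χ u)) u' L'
      · rw [Finset.card_erase_of_mem haS, hScard]; omega
      · exact fun ℓ hℓ => hLn ℓ (hsub hℓ)
      · rw [hu'len]; exact hℓminL'
      · intro ℓ hℓ
        rw [hu'len]
        exact L'.min'_le ℓ hℓ
      · intro w hpre hwL'
        have hwT : w.length ∈ T := (Finset.mem_filter.mp hwL').1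
        have hbw : b w.length = i := (Finset.mem_filter.mp hwL').2
        have hupre : u <+: w := by
          refine List.IsPrefix.trans ⟨i :: List.replicate (ℓmin - ℓ₀ - 1) i, rfl⟩ hpre
        have hwS : χ w ∈ S := hcol w hupre (hsub hwL')
        obtain ⟨t, ht⟩ := hpre
        have hwform : w = u ++ i :: (List.replicate (ℓmin - ℓ₀ - 1) i ++ t) := by
          rw [← ht, hu']; simp
        have hwlen : (List.replicate (ℓmin - ℓ₀ - 1) i ++ t).length = w.length - ℓ₀ - 1 := by
          have : w.length = ℓ₀ + 1 + (List.replicate (ℓmin - ℓ₀ - 1) i ++ t).length := by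
            rw [hwform]; simp [List.length_append]; omega
          omega
        have hne : χ w ≠ χ u := by
          have := hb w.length hwT (List.replicate (ℓmin - ℓ₀ - 1) i ++ t) hwlen
          rw [hbw] at this
          rw [hwform]
          exact this
        exact Finset.mem_erase.mpr ⟨hne, hwS⟩
      · omega
  
lemma gfun_real {k : ℕ} (hk : 2 ≤ k) (m : ℕ) :
    (gfun k m : ℝ) + (Real.exp (1 / (k - 1 : ℝ)) - 1) ≤
      Real.exp (1 / (k - 1 : ℝ)) * (k - 1 : ℝ) ^ m * ((m + 1).factorial : ℝ) := by
  have hk1 : (1 : ℝ) ≤ (k : ℝ) - 1 := by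
    have : (2 : ℝ) ≤ (k : ℝ) := by exact_mod_cast hk
    linarith
  have hkpos : (0 : ℝ) < (k : ℝ) - 1 := by linarith
  have hE : 1 / ((k : ℝ) - 1) + 1 ≤ Real.exp (1 / (k - 1 : ℝ)) :=
    Real.add_one_le_exp _
  have hE1 : (1 : ℝ) ≤ ((k : ℝ) - 1) * (Real.exp (1 / (k - 1 : ℝ)) - 1) := by
    have h := mul_le_mul_of_nonneg_left hE (le_of_lt hkpos)
    have : ((k : ℝ) - 1) * (1 / ((k : ℝ) - 1)) = 1 := by
      field_simp
    nlinarith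
  induction m with
  | zero =>
    simp [gfun]
  | succ m ih =>
    have hy : (0 : ℝ) ≤ Real.exp (1 / (k - 1 : ℝ)) * (k - 1 : ℝ) ^ m * ((m + 1).factorial : ℝ) := by
      positivity
    have hfac : ((m + 2).factorial : ℝ) = ((m : ℝ) + 2) * ((m + 1).factorial : ℝ) := by
      rw [show m + 2 = (m + 1) + 1 from rfl, Nat.factorial_succ]
      push_cast; ring
    have hkm : (k : ℝ) ≤ ((m : ℝ) + 2) * ((k : ℝ) - 1) := by
      have hm : (0 : ℝ) ≤ (m : ℝ) := Nat.cast_nonneg m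
      nlinarith
    have hgf : (gfun k (m + 1) : ℝ) = (k : ℝ) * (gfun k m : ℝ) + 1 := by
      simp only [gfun]; push_cast; ring
    have hkR : (0 : ℝ) ≤ (k : ℝ) := Nat.cast_nonneg k
    have step1 := mul_le_mul_of_nonneg_left ih hkR
    have step2 := mul_le_mul_of_nonneg_right hkm hy
    rw [hgf]
    rw [show m + 1 + 1 = m + 2 from rfl, hfac]
    have hrw : Real.exp (1 / (k - 1 : ℝ)) * ((k:ℝ) - 1) ^ (m+1) * (((m:ℝ) + 2) * ((m + 1).factorial : ℝ))
        = ((m:ℝ) + 2) * ((k:ℝ) - 1) * (Real.exp (1 / (k - 1 : ℝ)) * ((k:ℝ) - 1) ^ m * ((m + 1).factorial : ℝ)) := by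
      ring
    rw [hrw]
    nlinarith
  
theorem tree_one_balanced_bound (k c : ℕ) (hk : 2 ≤ k) (hc : 2 ≤ c) :
    ∀ χ : List (Fin k) → Fin c,
      IsOneBalanced k c
        ⌊Real.exp (1 / (k - 1 : ℝ)) * (k - 1 : ℝ) ^ (c - 1) * (Nat.factorial c : ℝ)⌋₊
        χ := by
  intro χ
  set n := ⌊Real.exp (1 / (k - 1 : ℝ)) * (k - 1 : ℝ) ^ (c - 1) * (Nat.factorial c : ℝ)⌋₊ with hn
  have hEpos : (0 : ℝ) ≤ Real.exp (1 / (k - 1 : ℝ)) - 1 := by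
    have h2 : (2 : ℝ) ≤ (k : ℝ) := by exact_mod_cast hk
    have : (1 : ℝ) ≤ Real.exp (1 / (k - 1 : ℝ)) := by
      apply Real.one_le_exp
      apply div_nonneg zero_le_one (by linarith)
    linarith
  have hbound : gfun k (c - 1) ≤ n := by
    rw [hn]
    apply Nat.le_floor
    have h := gfun_real hk (c - 1)
    have hc1 : c - 1 + 1 = c := by omega
    rw [hc1] at h
    linarith
  apply key_lemma hk n χ (c - 1) Finset.univ [] (Finset.range (n + 1))
  · rw [Finset.card_univ, Fintype.card_fin]
    omega
  · intro ℓ hℓ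
    rw [Finset.mem_range] at hℓ
    omega
  · simp
  · intro ℓ _
    simp
  · intro w _ _
    exact Finset.mem_univ _
  · rw [Finset.card_range]
    omega
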